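/- Let K, L be compact spaces, Φ : C_p(K) → C_w(L) a homeomorphism fixing the zero function. Suppose y ∈ L, m ∈ ℕ, and A ⊆ K is a finite set with Φ(O_K(A; 1/m)) ⊆ ̅W_L(δ_y; 1). For each x ∈ A let F_x ⊆ M(L) be a finite set of measures and n_x ∈ ℕ with Φ^{-1}(W_L(F_x; 1/n_x)) ⊆ O_K(x; 1/m). Then δ_y lies in the linear span of ⋃_{x ∈ A} F_x inside M(L). -/

import Mathlib

open Set TopologicalSpace

noncomputable section

/-- `C(K)` with the topology of pointwise convergence. -/
def Cp (K : Type*) [TopologicalSpace K] : Type _ := C(K, ℝ)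

instance (K : Type*) [TopologicalSpace K] : TopologicalSpace (Cp K) :=
  TopologicalSpace.induced (fun f : C(K, ℝ) => (f : K → ℝ)) inferInstance

instance (K : Type*) [TopologicalSpace K] : Zero (Cp K) := ⟨(0 : C(K, ℝ))⟩

/-- Evaluation of an element of `Cp K` at a point. -/
def Cp.toFun {K : Type*} [TopologicalSpace K] (f : Cp K) : K → ℝ :=
  ContinuousMap.toFun f

/-- `C(K)` (for `K` compact) with the weak topology of the Banach space `C(K)`:
the topology induced by all continuous linear functionals. -/
def Cw (K : Type*) [TopologicalSpace K] [CompactSpace K] : Type _ := C(K, ℝ)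

instance (K : Type*) [TopologicalSpace K] [CompactSpace K] : TopologicalSpace (Cw K) :=
  TopologicalSpace.induced
    (fun (f : C(K, ℝ)) (φ : C(K, ℝ) →L[ℝ] ℝ) => φ f) inferInstance

instance (K : Type*) [TopologicalSpace K] [CompactSpace K] : Zero (Cw K) := ⟨(0 : C(K, ℝ))⟩

/-- Evaluation of an element of `Cw K` at a point. -/
def Cw.toFun {K : Type*} [TopologicalSpace K] [CompactSpace K] (f : Cw K) : K → ℝ :=
  ContinuousMap.toFun f

/-- The basic pointwise neighborhood `O_K(E; ε) = {f : |f(x)| < ε for all x ∈ E}` of `0` in `Cp K`. -/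
def OK (K : Type*) [TopologicalSpace K] (E : Set K) (ε : ℝ) : Set (Cp K) :=
  {f | ∀ x ∈ E, |Cp.toFun f x| < ε}

/-- `W̄_L(δ_y; ε) = {f : |f(y)| ≤ ε}`, a closed weak neighborhood of `0` in `Cw L`. -/
def WbarL (L : Type*) [TopologicalSpace L] [CompactSpace L] (y : L) (ε : ℝ) : Set (Cw L) :=
  {f | |Cw.toFun f y| ≤ ε}

/-- The Dirac measure at `y`, as an element of `M(L) = C(L)*` with the weak* topology. -/
def dirac (L : Type*) [TopologicalSpace L] [CompactSpace L] (y : L) :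
    WeakDual ℝ C(L, ℝ) :=
  ContinuousMap.evalCLM ℝ y

/-- The basic weak neighborhood `W_L(F; ε) = {f : |μ(f)| < ε for all μ ∈ F}` of `0` in `Cw L`. -/
def WL (L : Type*) [TopologicalSpace L] [CompactSpace L]
    (F : Set (WeakDual ℝ C(L, ℝ))) (ε : ℝ) : Set (Cw L) :=
  {f | ∀ μ ∈ F, |μ (show C(L, ℝ) from f)| < ε}

/-- Key Lemma: if `Φ(O_K(A; 1/m)) ⊆ W̄_L(δ_y; 1)` and for each `x ∈ A` a finite set
`F x ⊆ M(L)` satisfies `Φ⁻¹(W_L(F x; 1/n x)) ⊆ O_K(x; 1/m)`, then `δ_y` lies in the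
linear span of `⋃_{x ∈ A} F x` in `M(L)`. -/
theorem stmt7 (K L : Type*) [TopologicalSpace K] [CompactSpace K]
    [TopologicalSpace L] [CompactSpace L]
    (Φ : Cp K ≃ₜ Cw L) (hΦ : Φ 0 = 0) (y : L) (m : ℕ) (hm : 0 < m)
    (A : Set K) (hA : A.Finite)
    (hAy : Φ '' OK K A (1 / (m : ℝ)) ⊆ WbarL L y 1)
    (F : K → Set (WeakDual ℝ C(L, ℝ))) (n : K → ℕ)
    (hF : ∀ x ∈ A, (F x).Finite ∧ 0 < n x ∧
      Φ ⁻¹' (WL L (F x) (1 / (n x : ℝ))) ⊆ OK K {x} (1 / (m : ℝ))) :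
    dirac L y ∈ Submodule.span ℝ (⋃ x ∈ A, F x) := by

  classical
  set G : Set (WeakDual ℝ C(L, ℝ)) := ⋃ x ∈ A, F x with hG
  have hGfin : G.Finite := hA.biUnion fun x hx => (hF x hx).1
  -- Analytic key step: any `f` annihilated by all of `G` vanishes at `y`.
  have key : ∀ f : C(L, ℝ), (∀ μ ∈ G, μ f = 0) → f y = 0 := by
    intro f hf
    by_contra hfy
    have hfy' : (0 : ℝ) < |f y| := abs_pos.mpr hfy
    set t : ℝ := 2 / |f y| with ht_def
    have ht : 0 < t := by positivity
    have h1 : Φ.symm (show Cw L from t • f) ∈ OK K A (1 / (m : ℝ)) := by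
      intro x hx
      have h2 := (hF x hx).2.2
      have hmem : Φ (Φ.symm (show Cw L from t • f)) ∈ WL L (F x) (1 / (n x : ℝ)) := by
        rw [Φ.apply_symm_apply]
        intro μ hμ
        have : μ (t • f) = 0 := by
          rw [map_smul]
          have := hf μ (Set.mem_biUnion hx hμ)
          simp [this]
        rw [show (show C(L, ℝ) from (show Cw L from t • f)) = t • f from rfl, this]
        have : (0 : ℝ) < 1 / (n x : ℝ) := by
          have := (hF x hx).2.1
          positivity
        simpa using this
      exact h2 hmem x rfl
    have h3 : (show Cw L from t • f) ∈ WbarL L y 1 :=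
      hAy ⟨Φ.symm (show Cw L from t • f), h1, Φ.apply_symm_apply _⟩
    have h4 : |t * f y| ≤ 1 := by
      have h3' : |Cw.toFun (show Cw L from t • f) y| ≤ 1 := h3
      simpa [Cw.toFun] using h3'
    have h5 : |t * f y| = 2 := by
      rw [abs_mul, abs_of_pos ht, ht_def]
      field_simp
    linarith [h4, h5.symm.le]
  -- Linear algebra step.
  haveI : Finite ↥G := hGfin
  let c : WeakDual ℝ C(L, ℝ) →ₗ[ℝ] (C(L, ℝ) →ₗ[ℝ] ℝ) := ContinuousLinearMap.coeLM ℝ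
  have hc : Function.Injective c := ContinuousLinearMap.coe_injective
  let Lm : ↥G → (C(L, ℝ) →ₗ[ℝ] ℝ) := fun μ => c μ.1
  have hker : ⨅ i, LinearMap.ker (Lm i) ≤ LinearMap.ker (c (dirac L y)) := by
    intro f hf
    simp only [Submodule.mem_iInf, LinearMap.mem_ker] at hf ⊢
    have : f y = 0 := key f (fun μ hμ => hf ⟨μ, hμ⟩)
    exact this
  have hspan := mem_span_of_iInf_ker_le_ker hker
  have hrange : Set.range Lm = c '' G := by
    ext g
    constructor
    · rintro ⟨⟨μ, hμ⟩, rfl⟩; exact ⟨μ, hμ, rfl⟩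
    · rintro ⟨μ, hμ, rfl⟩; exact ⟨⟨μ, hμ⟩, rfl⟩
  rw [hrange, Submodule.apply_mem_span_image_iff_mem_span hc] at hspan
  exact hspan
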